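/- For all ε, ε' ∈ ℝ and all real symmetric n×n matrices W, W', one has ‖Φ(ε,W) − Φ(ε',W')‖_F ≤ ‖W − W'‖_F + (√n/2)·|ε − ε'|. In particular, the map (ε,W) ↦ Φ(ε,W) is (globally, hence locally) Lipschitz continuous on ℝ × Sⁿ. -/

import Mathlib

/-- The Huber smoothing function `h(ε,t)`. -/
noncomputable def huber (ε t : ℝ) : ℝ :=
  if ε = 0 then max 0 t
  else if |ε| < t then t - |ε| / 2
  else if 0 ≤ t then t ^ 2 / (2 * |ε|)
  else 0

noncomputable def hubA (a t : ℝ) : ℝ :=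
  if a < t then t - a / 2 else if 0 ≤ t then t ^ 2 / (2 * a) else 0

lemma huber_ne {ε : ℝ} (h : ε ≠ 0) (t : ℝ) : huber ε t = hubA |ε| t := by
  simp [huber, hubA, h]

lemma hubA_of_lt {a t : ℝ} (h : a < t) : hubA a t = t - a / 2 := if_pos h

lemma hubA_of_mid {a t : ℝ} (h0 : 0 ≤ t) (h : t ≤ a) : hubA a t = t ^ 2 / (2 * a) := by
  unfold hubA; rw [if_neg (not_lt.2 h), if_pos h0]

lemma hubA_of_neg {a t : ℝ} (ha : 0 ≤ a) (h : t < 0) : hubA a t = 0 := by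
  unfold hubA; rw [if_neg (not_lt.2 (h.le.trans ha)), if_neg (not_le.2 h)]

lemma hubA_bounds {a : ℝ} (ha : 0 < a) {s t : ℝ} (hst : s ≤ t) :
    0 ≤ hubA a t - hubA a s ∧ hubA a t - hubA a s ≤ t - s := by
  have e_t : 2 * a * (t^2/(2*a)) = t^2 := by field_simp
  have e_s : 2 * a * (s^2/(2*a)) = s^2 := by field_simp
  have q_t : 0 ≤ t^2/(2*a) := by positivity
  have q_s : 0 ≤ s^2/(2*a) := by positivity
  rcases lt_or_ge a s with hs1 | hs1
  · rw [hubA_of_lt hs1, hubA_of_lt (hs1.trans_le hst)]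
    constructor <;> linarith
  · rcases le_or_gt 0 s with hs0 | hs0
    · rw [hubA_of_mid hs0 hs1]
      rcases lt_or_ge a t with ht1 | ht1
      · rw [hubA_of_lt ht1]
        constructor <;> nlinarith [sq_nonneg (a - s)]
      · rw [hubA_of_mid (hs0.trans hst) ht1]
        constructor <;> nlinarith
    · rw [hubA_of_neg ha.le hs0]
      rcases lt_or_ge a t with ht1 | ht1
      · rw [hubA_of_lt ht1]; constructor <;> linarith
      · rcases le_or_gt 0 t with ht0 | ht0
        · rw [hubA_of_mid ht0 ht1]
          constructor <;> nlinarith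
        · rw [hubA_of_neg ha.le ht0]; constructor <;> linarith

lemma hubA_eps {a b t : ℝ} (ha : 0 < a) (hab : a ≤ b) :
    0 ≤ hubA a t - hubA b t ∧ hubA a t - hubA b t ≤ (b - a) / 2 := by
  have hb : 0 < b := ha.trans_le hab
  rcases lt_or_ge b t with h1 | h1
  · rw [hubA_of_lt (hab.trans_lt h1), hubA_of_lt h1]
    constructor <;> linarith
  · rcases lt_or_ge a t with h2 | h2
    · have h0 : 0 ≤ t := (ha.trans h2).le
      rw [hubA_of_lt h2, hubA_of_mid h0 h1]
      have e_b : 2 * b * (t^2/(2*b)) = t^2 := by field_simp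
      constructor <;> nlinarith [sq_nonneg (b - t), mul_pos ha hb]
    · rcases le_or_gt 0 t with h0 | h0
      · rw [hubA_of_mid h0 h2, hubA_of_mid h0 (h2.trans hab)]
        have key : t^2/(2*a) - t^2/(2*b) = t^2*(b-a)/(2*a*b) := by
          field_simp
        rw [key]
        have htab : t^2 ≤ a * b := by nlinarith
        constructor
        · apply div_nonneg _ (by positivity)
          nlinarith
        · rw [div_le_div_iff₀ (by positivity) two_pos]
          nlinarith [mul_nonneg (sub_nonneg.2 hab) (sub_nonneg.2 htab)]
      · rw [hubA_of_neg ha.le h0, hubA_of_neg hb.le h0]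
        constructor <;> linarith

lemma hubZero_eps {b t : ℝ} (hb : 0 < b) :
    0 ≤ max 0 t - hubA b t ∧ max 0 t - hubA b t ≤ b / 2 := by
  rcases lt_or_ge b t with h1 | h1
  · rw [hubA_of_lt h1, max_eq_right (hb.le.trans h1.le)]
    constructor <;> linarith
  · rcases le_or_gt 0 t with h0 | h0
    · rw [hubA_of_mid h0 h1, max_eq_right h0]
      have e_b : 2 * b * (t^2/(2*b)) = t^2 := by field_simp
      constructor <;> nlinarith [sq_nonneg (b - t)]
    · rw [hubA_of_neg hb.le h0, max_eq_left h0.le]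
      constructor <;> linarith

lemma huber_sub_bounds (ε : ℝ) {s t : ℝ} (hst : s ≤ t) :
    0 ≤ huber ε t - huber ε s ∧ huber ε t - huber ε s ≤ t - s := by
  rcases eq_or_ne ε 0 with h | h
  · simp only [huber, if_pos h]
    constructor
    · exact sub_nonneg.2 (max_le_max le_rfl hst)
    · rcases le_total 0 s with hs | hs <;> rcases le_total 0 t with ht | ht <;>
        simp [max_eq_left, max_eq_right, *] <;> linarith
  · rw [huber_ne h, huber_ne h]
    exact hubA_bounds (abs_pos.mpr h) hst

lemma huber_lip_t (ε s t : ℝ) : |huber ε t - huber ε s| ≤ |t - s| := by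
  rcases le_total s t with hst | hst
  · obtain ⟨h1, h2⟩ := huber_sub_bounds ε hst
    rw [abs_of_nonneg h1]
    exact h2.trans (le_abs_self _)
  · obtain ⟨h1, h2⟩ := huber_sub_bounds ε hst
    rw [abs_sub_comm, abs_of_nonneg h1, abs_sub_comm]
    exact h2.trans (le_abs_self _)

lemma huber_sub_eps_bounds (ε ε' t : ℝ) (hab : |ε| ≤ |ε'|) :
    0 ≤ huber ε t - huber ε' t ∧ huber ε t - huber ε' t ≤ (|ε'| - |ε|) / 2 := by
  rcases eq_or_ne ε' 0 with h' | h'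
  · have h : ε = 0 := by
      rw [h', abs_zero] at hab
      exact abs_eq_zero.mp (le_antisymm hab (abs_nonneg ε))
    simp [h, h']
  · have hb : (0:ℝ) < |ε'| := abs_pos.mpr h'
    rcases eq_or_ne ε 0 with h | h
    · subst h
      rw [huber_ne h', show huber 0 t = max 0 t from if_pos rfl, abs_zero]
      obtain ⟨h1, h2⟩ := hubZero_eps (t := t) hb
      exact ⟨h1, by linarith⟩
    · rw [huber_ne h, huber_ne h']
      exact hubA_eps (abs_pos.mpr h) hab

lemma huber_lip_eps (ε ε' t : ℝ) : |huber ε t - huber ε' t| ≤ |ε - ε'| / 2 := by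
  have key := abs_abs_sub_abs_le_abs_sub ε ε'
  rcases le_total |ε| |ε'| with hab | hab
  · obtain ⟨h1, h2⟩ := huber_sub_eps_bounds ε ε' t hab
    rw [abs_of_nonneg h1]
    have h3 : |ε'| - |ε| ≤ |ε - ε'| := by
      have : |ε'| - |ε| ≤ abs (abs ε - abs ε') := by
        rw [abs_sub_comm]; exact le_abs_self _
      linarith
    linarith
  · obtain ⟨h1, h2⟩ := huber_sub_eps_bounds ε' ε t hab
    rw [abs_sub_comm, abs_of_nonneg h1]
    have h3 : |ε| - |ε'| ≤ |ε - ε'| := by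
      have : |ε| - |ε'| ≤ abs (abs ε - abs ε') := le_abs_self _
      linarith
    linarith


/-- The Frobenius norm of a real matrix. -/
noncomputable def frobNorm {n : ℕ} (M : Matrix (Fin n) (Fin n) ℝ) : ℝ :=
  Real.sqrt (∑ i, ∑ j, (M i j) ^ 2)

noncomputable def frobSq {n : ℕ} (M : Matrix (Fin n) (Fin n) ℝ) : ℝ :=
  ∑ i, ∑ j, (M i j) ^ 2

lemma frobNorm_eq {n : ℕ} (M : Matrix (Fin n) (Fin n) ℝ) :
    frobNorm M = Real.sqrt (frobSq M) := rfl

lemma frobSq_eq_trace {n : ℕ} (M : Matrix (Fin n) (Fin n) ℝ) :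
    frobSq M = Matrix.trace (star M * M) := by
  simp only [Matrix.trace, Matrix.diag, Matrix.mul_apply, Matrix.star_apply, star_trivial,
    frobSq, sq]
  exact Finset.sum_comm

lemma frobSq_conj {n : ℕ} (M U V : Matrix (Fin n) (Fin n) ℝ)
    (hU : U * star U = 1) (hV : V * star V = 1) :
    frobSq (star U * M * V) = frobSq M := by
  rw [frobSq_eq_trace, frobSq_eq_trace]
  rw [star_mul, star_mul, star_star]
  simp only [← Matrix.mul_assoc]
  rw [show star V * star M * U * star U = star V * star M * (U * star U) by
    rw [Matrix.mul_assoc], hU, Matrix.mul_one]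
  rw [Matrix.trace_mul_comm, ← Matrix.mul_assoc, ← Matrix.mul_assoc, hV, Matrix.one_mul]

lemma frobSq_mono {n : ℕ} (X Y : Matrix (Fin n) (Fin n) ℝ)
    (h : ∀ i j, (X i j) ^ 2 ≤ (Y i j) ^ 2) : frobSq X ≤ frobSq Y :=
  Finset.sum_le_sum fun i _ => Finset.sum_le_sum fun j _ => h i j

lemma frobSq_nonneg {n : ℕ} (M : Matrix (Fin n) (Fin n) ℝ) : 0 ≤ frobSq M := by
  unfold frobSq; positivity

lemma cfc_eq' {n : ℕ} {W : Matrix (Fin n) (Fin n) ℝ} (hW : W.IsHermitian) (f : ℝ → ℝ) :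
    hW.cfc f = (hW.eigenvectorUnitary : Matrix (Fin n) (Fin n) ℝ)
      * Matrix.diagonal (f ∘ hW.eigenvalues)
      * star (hW.eigenvectorUnitary : Matrix (Fin n) (Fin n) ℝ) := by
  rw [Matrix.IsHermitian.cfc, RCLike.ofReal_real_eq_id]
  simp [Function.comp_def]

lemma spectral' {n : ℕ} {W : Matrix (Fin n) (Fin n) ℝ} (hW : W.IsHermitian) :
    W = (hW.eigenvectorUnitary : Matrix (Fin n) (Fin n) ℝ)
      * Matrix.diagonal (hW.eigenvalues)
      * star (hW.eigenvectorUnitary : Matrix (Fin n) (Fin n) ℝ) := by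
  conv_lhs => rw [hW.spectral_theorem]
  rw [RCLike.ofReal_real_eq_id]
  simp [Function.comp_def]

lemma conj_sub_eq {n : ℕ} (U V : Matrix (Fin n) (Fin n) ℝ)
    (hU : star U * U = 1) (hV : star V * V = 1) (d e : Fin n → ℝ) :
    star U * (U * Matrix.diagonal d * star U - V * Matrix.diagonal e * star V) * V
      = Matrix.diagonal d * (star U * V) - (star U * V) * Matrix.diagonal e := by
  simp only [Matrix.mul_sub, Matrix.sub_mul]
  congr 1
  · simp only [← Matrix.mul_assoc]
    rw [hU, Matrix.one_mul, Matrix.mul_assoc]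
  · simp only [← Matrix.mul_assoc]
    rw [Matrix.mul_assoc (star U * V * Matrix.diagonal e), hV, Matrix.mul_one]

lemma frobNorm_cfc_sub_cfc {n : ℕ} {W W' : Matrix (Fin n) (Fin n) ℝ}
    (hW : W.IsHermitian) (hW' : W'.IsHermitian) (f : ℝ → ℝ)
    (hf : ∀ s t : ℝ, |f t - f s| ≤ |t - s|) :
    frobNorm (hW.cfc f - hW'.cfc f) ≤ frobNorm (W - W') := by
  set U : Matrix (Fin n) (Fin n) ℝ := (hW.eigenvectorUnitary : Matrix (Fin n) (Fin n) ℝ) with hUdef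
  set V : Matrix (Fin n) (Fin n) ℝ := (hW'.eigenvectorUnitary : Matrix (Fin n) (Fin n) ℝ) with hVdef
  have hU1 : U * star U = 1 := Matrix.mem_unitaryGroup_iff.mp hW.eigenvectorUnitary.2
  have hU2 : star U * U = 1 := Matrix.mem_unitaryGroup_iff'.mp hW.eigenvectorUnitary.2
  have hV1 : V * star V = 1 := Matrix.mem_unitaryGroup_iff.mp hW'.eigenvectorUnitary.2
  have hV2 : star V * V = 1 := Matrix.mem_unitaryGroup_iff'.mp hW'.eigenvectorUnitary.2
  rw [frobNorm_eq, frobNorm_eq]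
  apply Real.sqrt_le_sqrt
  rw [← frobSq_conj (hW.cfc f - hW'.cfc f) U V hU1 hV1,
    ← frobSq_conj (W - W') U V hU1 hV1]
  have eX : star U * (hW.cfc f - hW'.cfc f) * V
      = Matrix.diagonal (f ∘ hW.eigenvalues) * (star U * V)
        - (star U * V) * Matrix.diagonal (f ∘ hW'.eigenvalues) := by
    rw [cfc_eq' hW f, cfc_eq' hW' f]
    exact conj_sub_eq U V hU2 hV2 _ _
  have eY : star U * (W - W') * V
      = Matrix.diagonal hW.eigenvalues * (star U * V)
        - (star U * V) * Matrix.diagonal hW'.eigenvalues := by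
    rw [show W - W' = (U * Matrix.diagonal hW.eigenvalues * star U)
        - (V * Matrix.diagonal hW'.eigenvalues * star V) by
      rw [← spectral' hW, ← spectral' hW']]
    exact conj_sub_eq U V hU2 hV2 _ _
  rw [eX, eY]
  apply frobSq_mono
  intro i j
  simp only [Matrix.sub_apply, Matrix.diagonal_mul, Matrix.mul_diagonal, Function.comp_apply]
  have h := hf (hW'.eigenvalues j) (hW.eigenvalues i)
  have h2 : (f (hW.eigenvalues i) - f (hW'.eigenvalues j)) ^ 2
      ≤ (hW.eigenvalues i - hW'.eigenvalues j) ^ 2 := by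
    rw [← sq_abs (f _ - f _), ← sq_abs (hW.eigenvalues i - _)]
    exact pow_le_pow_left₀ (abs_nonneg _) h 2
  nlinarith [mul_le_mul_of_nonneg_right h2 (sq_nonneg ((star U * V) i j)),
    sq_nonneg ((star U * V) i j)]

lemma frobSq_diagonal {n : ℕ} (v : Fin n → ℝ) :
    frobSq (Matrix.diagonal v) = ∑ i, v i ^ 2 := by
  unfold frobSq
  have : ∀ i : Fin n, ∑ j, (Matrix.diagonal v i j) ^ 2 = v i ^ 2 := by
    intro i
    rw [Finset.sum_eq_single i]
    · rw [Matrix.diagonal_apply_eq]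
    · intro j _ hji
      rw [Matrix.diagonal_apply_ne' v hji]
      ring
    · simp
  simp [this]

lemma frobSq_unitary_conj {n : ℕ} (M U : Matrix (Fin n) (Fin n) ℝ)
    (hU1 : U * star U = 1) (hU2 : star U * U = 1) :
    frobSq (U * M * star U) = frobSq M := by
  have := frobSq_conj M (star U) (star U)
    (by rw [star_star]; exact hU2) (by rw [star_star]; exact hU2)
  rw [star_star] at this
  exact this

lemma frobNorm_cfc_sub_same {n : ℕ} {W : Matrix (Fin n) (Fin n) ℝ}
    (hW : W.IsHermitian) (f g : ℝ → ℝ) (c : ℝ) (hc : 0 ≤ c)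
    (hfg : ∀ t : ℝ, |f t - g t| ≤ c) :
    frobNorm (hW.cfc f - hW.cfc g) ≤ Real.sqrt n * c := by
  set U : Matrix (Fin n) (Fin n) ℝ := (hW.eigenvectorUnitary : Matrix (Fin n) (Fin n) ℝ)
    with hUdef
  have hU1 : U * star U = 1 := Matrix.mem_unitaryGroup_iff.mp hW.eigenvectorUnitary.2
  have hU2 : star U * U = 1 := Matrix.mem_unitaryGroup_iff'.mp hW.eigenvectorUnitary.2
  have e : hW.cfc f - hW.cfc g
      = U * Matrix.diagonal (fun i => f (hW.eigenvalues i) - g (hW.eigenvalues i)) * star U := by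
    rw [cfc_eq' hW f, cfc_eq' hW g, ← Matrix.sub_mul, ← Matrix.mul_sub,
      Matrix.diagonal_sub]
    rfl
  rw [frobNorm_eq, e, frobSq_unitary_conj _ U hU1 hU2, frobSq_diagonal]
  have hb : ∑ i : Fin n, (f (hW.eigenvalues i) - g (hW.eigenvalues i)) ^ 2
      ≤ (n : ℝ) * c ^ 2 := by
    calc ∑ i : Fin n, (f (hW.eigenvalues i) - g (hW.eigenvalues i)) ^ 2
        ≤ ∑ _i : Fin n, c ^ 2 := by
          apply Finset.sum_le_sum
          intro i _
          have := hfg (hW.eigenvalues i)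
          nlinarith [abs_nonneg (f (hW.eigenvalues i) - g (hW.eigenvalues i)),
            le_abs_self (f (hW.eigenvalues i) - g (hW.eigenvalues i)),
            neg_abs_le (f (hW.eigenvalues i) - g (hW.eigenvalues i))]
      _ = (n : ℝ) * c ^ 2 := by simp [mul_comm]
  calc Real.sqrt (∑ i : Fin n, (f (hW.eigenvalues i) - g (hW.eigenvalues i)) ^ 2)
      ≤ Real.sqrt ((n : ℝ) * c ^ 2) := Real.sqrt_le_sqrt hb
    _ = Real.sqrt n * c := by
        rw [Real.sqrt_mul (Nat.cast_nonneg n), Real.sqrt_sq hc]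

lemma frobNorm_triangle {n : ℕ} (A B : Matrix (Fin n) (Fin n) ℝ) :
    frobNorm (A + B) ≤ frobNorm A + frobNorm B := by
  have key : ∀ M : Matrix (Fin n) (Fin n) ℝ,
      frobNorm M
        = ‖(WithLp.equiv 2 (Fin n × Fin n → ℝ)).symm (fun p => M p.1 p.2)‖ := by
    intro M
    rw [EuclideanSpace.norm_eq]
    simp [frobNorm, Fintype.sum_prod_type, sq_abs]
  rw [key, key, key]
  rw [show (fun p : Fin n × Fin n => (A + B) p.1 p.2)
      = (fun p : Fin n × Fin n => A p.1 p.2) + (fun p : Fin n × Fin n => B p.1 p.2) from rfl,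
    WithLp.equiv_symm_apply, WithLp.toLp_add]
  exact norm_add_le _ _

/-- The smoothed projection `Φ(ε,W) = h(ε,·)[W]`, defined through the primary matrix function
(Mathlib's `Matrix.IsHermitian.cfc`) of a real symmetric matrix `W`. -/
noncomputable def Phi {n : ℕ} (ε : ℝ) {W : Matrix (Fin n) (Fin n) ℝ}
    (hW : W.IsHermitian) : Matrix (Fin n) (Fin n) ℝ :=
  hW.cfc (huber ε)

/-- `‖Φ(ε,W) − Φ(ε',W')‖_F ≤ ‖W − W'‖_F + (√n/2)·|ε − ε'|`; in particular `Φ` is globally,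
hence locally, Lipschitz continuous on `ℝ × Sⁿ`. -/
theorem Phi_lipschitz {n : ℕ} (hn : 0 < n) (ε ε' : ℝ)
    (W W' : Matrix (Fin n) (Fin n) ℝ) (hW : W.IsHermitian) (hW' : W'.IsHermitian) :
    frobNorm (Phi ε hW - Phi ε' hW') ≤
      frobNorm (W - W') + (Real.sqrt n / 2) * |ε - ε'| := by
  have t1 : frobNorm (Phi ε hW - Phi ε' hW) ≤ Real.sqrt n * (|ε - ε'| / 2) :=
    frobNorm_cfc_sub_same hW (huber ε) (huber ε') (|ε - ε'| / 2) (by positivity)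
      (fun t => huber_lip_eps ε ε' t)
  have t2 : frobNorm (Phi ε' hW - Phi ε' hW') ≤ frobNorm (W - W') :=
    frobNorm_cfc_sub_cfc hW hW' (huber ε') (fun s t => huber_lip_t ε' s t)
  have tri : frobNorm (Phi ε hW - Phi ε' hW')
      ≤ frobNorm (Phi ε hW - Phi ε' hW) + frobNorm (Phi ε' hW - Phi ε' hW') := by
    have h := frobNorm_triangle (Phi ε hW - Phi ε' hW) (Phi ε' hW - Phi ε' hW')
    rwa [sub_add_sub_cancel] at h
  have e : Real.sqrt n * (|ε - ε'| / 2) = Real.sqrt n / 2 * |ε - ε'| := by ring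
  linarith
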